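/- For every real t > 0, ∫_{Δ₁} (∂F₁/∂x)(x,p) dx dp = ∫₀¹ dx/(2(x+2t)^{3/2}(2−x)^{1/2}), where F₁(x,p) = −x^{1/2}(1−x)^{1/2}/(4(x+2t)^{3/2} p^{3/4}(1−p)^{1/2}) and ∂F₁/∂x denotes the partial derivative of F₁ with respect to x; all fractional powers are the positive real ones. -/

import Mathlib

open MeasureTheory Set

lemma sq_rpow_half {a : ℝ} (ha : 0 ≤ a) : (a ^ ((1:ℝ)/2)) ^ 2 = a := by
  rw [← Real.rpow_natCast (a ^ ((1:ℝ)/2)) 2, ← Real.rpow_mul ha]; norm_num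

lemma rpow_threehalf {a : ℝ} (ha : 0 ≤ a) : a ^ ((3:ℝ)/2) = (a ^ ((1:ℝ)/2)) ^ 3 := by
  rw [← Real.rpow_natCast (a ^ ((1:ℝ)/2)) 3, ← Real.rpow_mul ha]; norm_num

lemma rpow_neg_half {a : ℝ} (ha : 0 ≤ a) : a ^ (-(1:ℝ)/2) = (a ^ ((1:ℝ)/2))⁻¹ := by
  rw [show -(1:ℝ)/2 = -(1/2) by ring, Real.rpow_neg ha]

/-- The region `Δ₁ = {(x,p) : 0 < x < 1, 0 < p ≤ (x/(2−x))²}`. -/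
def Delta1 : Set (ℝ × ℝ) :=
  {z | 0 < z.1 ∧ z.1 < 1 ∧ 0 < z.2 ∧ z.2 ≤ (z.1 / (2 - z.1)) ^ 2}

lemma rhs_deriv (t : ℝ) (ht : 0 < t) {x : ℝ} (hx0 : 0 ≤ x) (hx1 : x ≤ 1) :
    HasDerivAt (fun x : ℝ => -((1/(2*(1+t))) * ((2-x) ^ ((1:ℝ)/2) * (x + 2*t) ^ (-(1:ℝ)/2))))
      (1 / (2 * (x + 2 * t) ^ ((3:ℝ)/2) * (2 - x) ^ ((1:ℝ)/2))) x := by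
  have h2x : (0:ℝ) < 2 - x := by linarith
  have hxt : (0:ℝ) < x + 2*t := by linarith
  have h1 : HasDerivAt (fun x : ℝ => (2-x) ^ ((1:ℝ)/2))
      ((1:ℝ)/2 * (2-x) ^ ((1:ℝ)/2 - 1) * (-1)) x :=
    (Real.hasDerivAt_rpow_const (Or.inl h2x.ne')).comp x ((hasDerivAt_id x).const_sub 2)
  have h2 : HasDerivAt (fun x : ℝ => (x + 2*t) ^ (-(1:ℝ)/2))
      ((-(1:ℝ)/2) * (x + 2*t) ^ (-(1:ℝ)/2 - 1) * 1) x :=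
    ((Real.hasDerivAt_rpow_const (Or.inl hxt.ne')).comp x ((hasDerivAt_id x).add_const (2*t)) :)
  have H := (((h1.mul h2).const_mul ((1:ℝ)/(2*(1+t)))).neg)
  refine H.congr_deriv (Eq.symm ?_)
  set u := (2-x) ^ ((1:ℝ)/2) with hu
  set v := (x + 2*t) ^ ((1:ℝ)/2) with hv
  have hu2 : u ^ 2 = 2 - x := sq_rpow_half h2x.le
  have hv2 : v ^ 2 = x + 2*t := sq_rpow_half hxt.le
  have hupos : 0 < u := Real.rpow_pos_of_pos h2x _
  have hvpos : 0 < v := Real.rpow_pos_of_pos hxt _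
  have e1 : (2-x) ^ ((1:ℝ)/2 - 1) = u⁻¹ := by
    rw [show (1:ℝ)/2 - 1 = -(1/2) by ring, Real.rpow_neg h2x.le, hu]
  have e2 : (x + 2*t) ^ (-(1:ℝ)/2 - 1) = (v^3)⁻¹ := by
    rw [show -(1:ℝ)/2 - 1 = -(3/2) by ring, Real.rpow_neg hxt.le, rpow_threehalf hxt.le]
  have e3 : (x + 2*t) ^ ((3:ℝ)/2) = v^3 := rpow_threehalf hxt.le
  have e4 : (x + 2*t) ^ (-(1:ℝ)/2) = v⁻¹ := by
    rw [rpow_neg_half hxt.le]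
  rw [e1, e2, e3, e4]
  have ht1 : (1:ℝ) + t ≠ 0 := by positivity
  have key : u^2 + v^2 = 2+2*t := by rw [hu2, hv2]; ring
  field_simp
  linear_combination (-1) * key

lemma rhs_eval (t : ℝ) (ht : 0 < t) :
    (∫ x in Ioo (0:ℝ) 1, 1 / (2 * (x + 2 * t) ^ ((3:ℝ)/2) * (2 - x) ^ ((1:ℝ)/2)))
      = (1/(2*(1+t))) * (t ^ (-(1:ℝ)/2) - (1+2*t) ^ (-(1:ℝ)/2)) := by
  have hint : IntervalIntegrable
      (fun x : ℝ => 1 / (2 * (x + 2 * t) ^ ((3:ℝ)/2) * (2 - x) ^ ((1:ℝ)/2))) volume 0 1 := by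
    apply ContinuousOn.intervalIntegrable
    apply ContinuousOn.div continuousOn_const
    · apply ContinuousOn.mul
      · exact continuousOn_const.mul ((continuousOn_id.add continuousOn_const).rpow_const
          (fun x _ => Or.inr (by norm_num)))
      · exact (continuousOn_const.sub continuousOn_id).rpow_const (fun x _ => Or.inr (by norm_num))
    · intro x hx
      rw [Set.uIcc_of_le (by norm_num : (0:ℝ) ≤ 1)] at hx
      have h1 : (0:ℝ) < x + 2*t := by have := hx.1; linarith
      have h2 : (0:ℝ) < 2 - x := by have := hx.2; linarith
      positivity
  have heval := intervalIntegral.integral_eq_sub_of_hasDerivAt (f := fun x : ℝ =>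
      -((1/(2*(1+t))) * ((2-x) ^ ((1:ℝ)/2) * (x + 2*t) ^ (-(1:ℝ)/2))))
    (f' := fun x : ℝ => 1 / (2 * (x + 2 * t) ^ ((3:ℝ)/2) * (2 - x) ^ ((1:ℝ)/2)))
    (fun x hx => by
      rw [Set.uIcc_of_le (by norm_num : (0:ℝ) ≤ 1)] at hx
      exact rhs_deriv t ht hx.1 hx.2) hint
  rw [← integral_Ioc_eq_integral_Ioo, ← intervalIntegral.integral_of_le (by norm_num : (0:ℝ) ≤ 1),
    heval]
  norm_num
  have e3 : (2*t) ^ (-((1:ℝ)/2)) = 2 ^ (-((1:ℝ)/2)) * t ^ (-((1:ℝ)/2)) :=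
    Real.mul_rpow (by norm_num) ht.le
  have e4 : (2:ℝ) ^ ((1:ℝ)/2) * 2 ^ (-((1:ℝ)/2)) = 1 := by
    rw [← Real.rpow_add (by norm_num : (0:ℝ) < 2)]; norm_num
  rw [e3]
  linear_combination ((1+t)⁻¹*(1/2)*t ^ (-((1:ℝ)/2))) * e4

noncomputable def Pden (p : ℝ) : ℝ := p ^ ((3:ℝ)/4) * (1 - p) ^ ((1:ℝ)/2)

noncomputable def Wfn (t x : ℝ) : ℝ :=
  (((1/2) * (1-x) ^ ((1:ℝ)/2) / x ^ ((1:ℝ)/2) - (1/2) * x ^ ((1:ℝ)/2) / (1-x) ^ ((1:ℝ)/2))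
      * (-1) * (4 * (x + 2*t) ^ ((3:ℝ)/2))
    + (x ^ ((1:ℝ)/2) * (1-x) ^ ((1:ℝ)/2)) * (6 * (x + 2*t) ^ ((1:ℝ)/2)))
  / (4 * (x + 2*t) ^ ((3:ℝ)/2)) ^ 2

lemma Pden_pos {p : ℝ} (hp0 : 0 < p) (hp1 : p < 1) : 0 < Pden p := by
  have h1 : (0:ℝ) < 1 - p := by linarith
  unfold Pden; positivity

lemma F_hasDeriv (t : ℝ) (ht : 0 < t) {p x : ℝ} (hp0 : 0 < p) (hp1 : p < 1)
    (hx0 : 0 < x) (hx1 : x < 1) :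
    HasDerivAt (fun x : ℝ =>
        -(x ^ ((1:ℝ)/2) * (1 - x) ^ ((1:ℝ)/2)) /
          (4 * (x + 2 * t) ^ ((3:ℝ)/2) * p ^ ((3:ℝ)/4) * (1 - p) ^ ((1:ℝ)/2)))
      (Wfn t x / Pden p) x := by
  have h1x : (0:ℝ) < 1 - x := by linarith
  have hxt : (0:ℝ) < x + 2*t := by linarith
  have h1p : (0:ℝ) < 1 - p := by linarith
  have hA : HasDerivAt (fun x : ℝ => x ^ ((1:ℝ)/2)) ((1:ℝ)/2 * x ^ ((1:ℝ)/2 - 1)) x :=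
    Real.hasDerivAt_rpow_const (Or.inl hx0.ne')
  have hB : HasDerivAt (fun x : ℝ => (1-x) ^ ((1:ℝ)/2)) ((1:ℝ)/2 * (1-x) ^ ((1:ℝ)/2 - 1) * (-1)) x :=
    (Real.hasDerivAt_rpow_const (Or.inl h1x.ne')).comp x ((hasDerivAt_id x).const_sub 1)
  have hc := (hA.mul hB).neg
  have hA3 : HasDerivAt (fun x : ℝ => (x + 2*t) ^ ((3:ℝ)/2)) ((3:ℝ)/2 * (x + 2*t) ^ ((3:ℝ)/2 - 1) * 1) x :=
    ((Real.hasDerivAt_rpow_const (Or.inl hxt.ne')).comp x ((hasDerivAt_id x).add_const (2*t)) :)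
  have hd := ((hA3.const_mul (4:ℝ)).mul_const (p ^ ((3:ℝ)/4))).mul_const ((1 - p) ^ ((1:ℝ)/2))
  have hdne : 4 * (x + 2 * t) ^ ((3:ℝ)/2) * p ^ ((3:ℝ)/4) * (1 - p) ^ ((1:ℝ)/2) ≠ 0 := by
    positivity
  have H := hc.div hd hdne
  refine H.congr_deriv (Eq.symm ?_)
  simp only [Pi.neg_apply, Pi.mul_apply]
  have hapos : 0 < x ^ ((1:ℝ)/2) := Real.rpow_pos_of_pos hx0 _
  have hbpos : 0 < (1-x) ^ ((1:ℝ)/2) := Real.rpow_pos_of_pos h1x _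
  have hApos : 0 < (x + 2*t) ^ ((1:ℝ)/2) := Real.rpow_pos_of_pos hxt _
  have h34 : 0 < p ^ ((3:ℝ)/4) := Real.rpow_pos_of_pos hp0 _
  have h12p : 0 < (1-p) ^ ((1:ℝ)/2) := Real.rpow_pos_of_pos h1p _
  have e1 : x ^ ((1:ℝ)/2 - 1) = (x ^ ((1:ℝ)/2))⁻¹ := by
    rw [show (1:ℝ)/2 - 1 = -(1/2) by ring, Real.rpow_neg hx0.le]
  have e2 : (1-x) ^ ((1:ℝ)/2 - 1) = ((1-x) ^ ((1:ℝ)/2))⁻¹ := by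
    rw [show (1:ℝ)/2 - 1 = -(1/2) by ring, Real.rpow_neg h1x.le]
  have e3 : (x + 2*t) ^ ((3:ℝ)/2 - 1) = (x + 2*t) ^ ((1:ℝ)/2) := by
    rw [show (3:ℝ)/2 - 1 = 1/2 by ring]
  have e4 : (x + 2*t) ^ ((3:ℝ)/2) = ((x + 2*t) ^ ((1:ℝ)/2)) ^ 3 := rpow_threehalf hxt.le
  unfold Wfn Pden
  rw [e1, e2, e3, e4]
  rw [div_eq_div_iff (by positivity) (by positivity)]
  field_simp
  ring

noncomputable def x0 (p : ℝ) : ℝ := 2 * Real.sqrt p / (1 + Real.sqrt p)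

lemma x0_pos {p : ℝ} (hp0 : 0 < p) : 0 < x0 p := by
  have hs : 0 < Real.sqrt p := Real.sqrt_pos.mpr hp0
  unfold x0; positivity

lemma x0_lt_one {p : ℝ} (hp0 : 0 < p) (hp1 : p < 1) : x0 p < 1 := by
  have hs : 0 < Real.sqrt p := Real.sqrt_pos.mpr hp0
  have hs1 : Real.sqrt p < 1 := by
    rw [show (1:ℝ) = Real.sqrt 1 by simp]
    exact Real.sqrt_lt_sqrt hp0.le hp1
  rw [x0, div_lt_one (by positivity)]
  linarith

lemma section_eq {p : ℝ} (hp0 : 0 < p) (hp1 : p < 1) (x : ℝ) :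
    ((x, p) ∈ Delta1) ↔ x ∈ Set.Ico (x0 p) 1 := by
  show (0 < x ∧ x < 1 ∧ 0 < p ∧ p ≤ (x / (2 - x)) ^ 2) ↔ _
  have hs : 0 < Real.sqrt p := Real.sqrt_pos.mpr hp0
  have hs1 : Real.sqrt p < 1 := by
    rw [show (1:ℝ) = Real.sqrt 1 by simp]
    exact Real.sqrt_lt_sqrt hp0.le hp1
  have hsq : Real.sqrt p ^ 2 = p := Real.sq_sqrt hp0.le
  constructor
  · rintro ⟨hx0, hx1, -, hple⟩
    have h2x : (0:ℝ) < 2 - x := by linarith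
    have hq : Real.sqrt p ≤ x / (2 - x) := by
      have : Real.sqrt p ≤ Real.sqrt ((x / (2-x))^2) := Real.sqrt_le_sqrt hple
      rwa [Real.sqrt_sq (by positivity)] at this
    rw [le_div_iff₀ h2x] at hq
    refine ⟨?_, hx1⟩
    rw [x0, div_le_iff₀ (by positivity)]
    nlinarith
  · rintro ⟨hxle, hx1⟩
    have hx0p := x0_pos hp0
    have hx0 : 0 < x := lt_of_lt_of_le hx0p hxle
    have h2x : (0:ℝ) < 2 - x := by linarith
    refine ⟨hx0, hx1, hp0, ?_⟩
    rw [x0, div_le_iff₀ (by positivity)] at hxle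
    have hq : Real.sqrt p * (2 - x) ≤ x := by nlinarith
    have hq2 : Real.sqrt p ≤ x / (2 - x) := by rw [le_div_iff₀ h2x]; exact hq
    calc p = Real.sqrt p ^ 2 := hsq.symm
    _ ≤ (x / (2-x))^2 := by
        apply pow_le_pow_left₀ hs.le hq2

noncomputable def phi (t p : ℝ) : ℝ :=
  1 / (8 * Real.sqrt p * ((1 + t) * Real.sqrt p + t) ^ ((3:ℝ)/2))

lemma F_at_x0 (t : ℝ) (ht : 0 < t) {p : ℝ} (hp0 : 0 < p) (hp1 : p < 1) :
    -((x0 p) ^ ((1:ℝ)/2) * (1 - x0 p) ^ ((1:ℝ)/2)) /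
      (4 * (x0 p + 2 * t) ^ ((3:ℝ)/2) * p ^ ((3:ℝ)/4) * (1 - p) ^ ((1:ℝ)/2))
    = -(phi t p) := by
  set s := Real.sqrt p with hs_def
  have hs : 0 < s := Real.sqrt_pos.mpr hp0
  have hs1 : s < 1 := by
    rw [hs_def, show (1:ℝ) = Real.sqrt 1 by simp]
    exact Real.sqrt_lt_sqrt hp0.le hp1
  have hsq : s ^ 2 = p := Real.sq_sqrt hp0.le
  have h1s : 0 < 1 - s := by linarith
  have h1ps : 0 < 1 + s := by linarith
  have hB : 0 < (1+t)*s + t := by nlinarith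
  rw [x0]
  rw [show (1:ℝ) - 2*s/(1+s) = (1-s)/(1+s) by field_simp; ring]
  rw [show 2*s/(1+s) + 2*t = 2*((1+t)*s+t)/(1+s) by field_simp; ring]
  rw [Real.div_rpow (by positivity) h1ps.le ((1:ℝ)/2),
      Real.div_rpow h1s.le h1ps.le ((1:ℝ)/2),
      Real.div_rpow (by positivity) h1ps.le ((3:ℝ)/2),
      Real.mul_rpow (by norm_num) hs.le,
      Real.mul_rpow (by norm_num) hB.le]
  rw [show (1:ℝ) - p = (1-s)*(1+s) by rw [← hsq]; ring]
  rw [Real.mul_rpow h1s.le h1ps.le]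
  have hp34 : p ^ ((3:ℝ)/4) = s ^ ((3:ℝ)/2) := by
    rw [← hsq, ← Real.rpow_natCast s 2, ← Real.rpow_mul hs.le]
    norm_num
  rw [hp34, phi]
  rw [rpow_threehalf (by norm_num : (0:ℝ) ≤ 2), rpow_threehalf hB.le,
      rpow_threehalf h1ps.le, rpow_threehalf hs.le]
  have hc2 : ((2:ℝ) ^ ((1:ℝ)/2)) ^ 2 = 2 := sq_rpow_half (by norm_num)
  have hσ : (s ^ ((1:ℝ)/2)) ^ 2 = s := sq_rpow_half hs.le
  have hc2p : 0 < (2:ℝ) ^ ((1:ℝ)/2) := by positivity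
  have hσp : 0 < s ^ ((1:ℝ)/2) := Real.rpow_pos_of_pos hs _
  have hwp : 0 < (1+s) ^ ((1:ℝ)/2) := Real.rpow_pos_of_pos h1ps _
  have hyp : 0 < (1-s) ^ ((1:ℝ)/2) := Real.rpow_pos_of_pos h1s _
  have hBp : 0 < ((1+t)*s+t) ^ ((1:ℝ)/2) := Real.rpow_pos_of_pos hB _
  have h1 : Real.sqrt p = (s ^ ((1:ℝ)/2)) ^ 2 := by rw [hσ]
  field_simp
  linear_combination (-8) * h1 + (4 * (s^((1:ℝ)/2))^2) * hc2

lemma intOn_rpow {r : ℝ} (hr : -1 < r) :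
    IntegrableOn (fun x : ℝ => x ^ r) (Set.Icc 0 1) := by
  rw [integrableOn_Icc_iff_integrableOn_Ioc,
    ← intervalIntegrable_iff_integrableOn_Ioc_of_le (by norm_num : (0:ℝ) ≤ 1)]
  exact intervalIntegral.intervalIntegrable_rpow' hr

lemma intOn_rpow_sub {r : ℝ} (hr : -1 < r) :
    IntegrableOn (fun x : ℝ => (1-x) ^ r) (Set.Icc 0 1) := by
  rw [integrableOn_Icc_iff_integrableOn_Ioc,
    ← intervalIntegrable_iff_integrableOn_Ioc_of_le (by norm_num : (0:ℝ) ≤ 1)]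
  have := ((intervalIntegral.intervalIntegrable_rpow' (a := 0) (b := 1) hr).comp_sub_left 1).symm
  simpa using this

noncomputable def Gfn (t x : ℝ) : ℝ :=
  (6 * x ^ ((1:ℝ)/2) * (1-x) ^ ((1:ℝ)/2) * (x+2*t) ^ ((1:ℝ)/2)) / (16 * ((x+2*t) ^ ((1:ℝ)/2))^6)
  + (-(2 * (1-x) ^ ((1:ℝ)/2) * ((x+2*t) ^ ((1:ℝ)/2))^3) / (16 * ((x+2*t) ^ ((1:ℝ)/2))^6)) * x ^ (-(1:ℝ)/2)
  + ((2 * x ^ ((1:ℝ)/2) * ((x+2*t) ^ ((1:ℝ)/2))^3) / (16 * ((x+2*t) ^ ((1:ℝ)/2))^6)) * (1-x) ^ (-(1:ℝ)/2)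

lemma Wfn_eq_Gfn (t : ℝ) (ht : 0 < t) {x : ℝ} (hx0 : 0 < x) (hx1 : x < 1) :
    Wfn t x = Gfn t x := by
  have h1x : (0:ℝ) < 1 - x := by linarith
  have hxt : (0:ℝ) < x + 2*t := by linarith
  have hapos : 0 < x ^ ((1:ℝ)/2) := Real.rpow_pos_of_pos hx0 _
  have hbpos : 0 < (1-x) ^ ((1:ℝ)/2) := Real.rpow_pos_of_pos h1x _
  have hApos : 0 < (x + 2*t) ^ ((1:ℝ)/2) := Real.rpow_pos_of_pos hxt _
  unfold Wfn Gfn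
  rw [rpow_threehalf hxt.le, rpow_neg_half hx0.le, rpow_neg_half h1x.le]
  field_simp
  ring

lemma Gfn_integrableOn (t : ℝ) (ht : 0 < t) : IntegrableOn (Gfn t) (Set.Icc 0 1) := by
  have hApos : ∀ x ∈ Set.Icc (0:ℝ) 1, (0:ℝ) < (x + 2*t) ^ ((1:ℝ)/2) :=
    fun x hx => Real.rpow_pos_of_pos (by have := hx.1; linarith) _
  have hcA : ContinuousOn (fun x : ℝ => (x + 2*t) ^ ((1:ℝ)/2)) (Set.Icc 0 1) :=
    (continuousOn_id.add continuousOn_const).rpow_const (fun x _ => Or.inr (by norm_num))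
  have hca : ContinuousOn (fun x : ℝ => x ^ ((1:ℝ)/2)) (Set.Icc 0 1) :=
    continuousOn_id.rpow_const (fun x _ => Or.inr (by norm_num))
  have hcb : ContinuousOn (fun x : ℝ => (1-x) ^ ((1:ℝ)/2)) (Set.Icc 0 1) :=
    (continuousOn_const.sub continuousOn_id).rpow_const (fun x _ => Or.inr (by norm_num))
  have hden : ContinuousOn (fun x : ℝ => 16 * ((x + 2*t) ^ ((1:ℝ)/2))^6) (Set.Icc 0 1) :=
    continuousOn_const.mul (hcA.pow 6)
  have hdenne : ∀ x ∈ Set.Icc (0:ℝ) 1, 16 * ((x + 2*t) ^ ((1:ℝ)/2))^6 ≠ 0 := by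
    intro x hx
    have := hApos x hx
    positivity
  unfold Gfn
  refine Integrable.add (Integrable.add ?_ ?_) ?_
  · exact (ContinuousOn.div (((continuousOn_const.mul hca).mul hcb).mul hcA) hden
      hdenne).integrableOn_Icc
  · exact IntegrableOn.continuousOn_mul
      (ContinuousOn.div ((continuousOn_const.mul hcb).mul (hcA.pow 3)).neg hden hdenne)
      (intOn_rpow (by norm_num)) isCompact_Icc
  · exact IntegrableOn.continuousOn_mul
      (ContinuousOn.div ((continuousOn_const.mul hca).mul (hcA.pow 3)) hden hdenne)
      (intOn_rpow_sub (by norm_num)) isCompact_Icc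

lemma Wfn_integrableOn (t : ℝ) (ht : 0 < t) : IntegrableOn (Wfn t) (Set.Ioo 0 1) := by
  apply IntegrableOn.congr_fun ((Gfn_integrableOn t ht).mono_set Set.Ioo_subset_Icc_self)
    (fun x hx => (Wfn_eq_Gfn t ht hx.1 hx.2).symm) measurableSet_Ioo

lemma Pden_inv_integrableOn : IntegrableOn (fun p : ℝ => (Pden p)⁻¹) (Set.Ioo 0 1) := by
  have hsub : Set.Ioo (0:ℝ) 1 ⊆ Set.Icc (0:ℝ) (1/2) ∪ Set.Icc (1/2) 1 := by
    intro p hp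
    rcases le_or_gt p (1/2) with h | h
    · exact Or.inl ⟨hp.1.le, h⟩
    · exact Or.inr ⟨h.le, hp.2.le⟩
  refine IntegrableOn.mono_set ?_ hsub
  apply IntegrableOn.union
  · apply IntegrableOn.congr_fun
      (f := fun p : ℝ => (((1-p) ^ ((1:ℝ)/2))⁻¹) * p ^ (-(3:ℝ)/4)) ?_ ?_ measurableSet_Icc
    · apply IntegrableOn.continuousOn_mul
        ((((continuousOn_const.sub continuousOn_id).rpow_const
          (fun x _ => Or.inr (by norm_num))).inv₀ ?_))
        ((intOn_rpow (by norm_num : (-1:ℝ) < -(3:ℝ)/4)).mono_set ?_) isCompact_Icc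
      · intro p hp
        have h1p : (0:ℝ) < 1 - p := by have := hp.2; linarith
        exact ne_of_gt (Real.rpow_pos_of_pos h1p _)
      · intro p hp
        exact ⟨hp.1, by linarith [hp.2]⟩
    · intro p hp
      show ((1-p) ^ ((1:ℝ)/2))⁻¹ * p ^ (-(3:ℝ)/4) = (Pden p)⁻¹
      unfold Pden
      rw [mul_inv, show -(3:ℝ)/4 = -((3:ℝ)/4) by norm_num, Real.rpow_neg hp.1]
      ring
  · apply IntegrableOn.congr_fun
      (f := fun p : ℝ => ((p ^ ((3:ℝ)/4))⁻¹) * (1-p) ^ (-(1:ℝ)/2) ) ?_ ?_ measurableSet_Icc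
    · apply IntegrableOn.continuousOn_mul
        (((continuousOn_id.rpow_const (fun x _ => Or.inr (by norm_num))).inv₀ ?_))
        ((intOn_rpow_sub (by norm_num : (-1:ℝ) < -(1:ℝ)/2)).mono_set ?_) isCompact_Icc
      · intro p hp
        have h0p : (0:ℝ) < p := by have := hp.1; linarith
        exact ne_of_gt (Real.rpow_pos_of_pos h0p _)
      · intro p hp
        exact ⟨by linarith [hp.1], hp.2⟩
    · intro p hp
      show (p ^ ((3:ℝ)/4))⁻¹ * (1-p) ^ (-(1:ℝ)/2) = (Pden p)⁻¹
      have h1p : (0:ℝ) ≤ 1 - p := by have := hp.2; linarith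
      unfold Pden
      rw [mul_inv, show -(1:ℝ)/2 = -((1:ℝ)/2) by norm_num, Real.rpow_neg h1p]

lemma phi_hasDeriv (t : ℝ) (ht : 0 < t) {p : ℝ} (hp0 : 0 < p) (hp1 : p < 1) :
    HasDerivAt (fun p : ℝ => -((1/(2*(1+t))) * ((1+t) * Real.sqrt p + t) ^ (-(1:ℝ)/2)))
      (phi t p) p := by
  have hs : 0 < Real.sqrt p := Real.sqrt_pos.mpr hp0
  have hX : 0 < (1+t) * Real.sqrt p + t := by nlinarith
  have hsq : HasDerivAt Real.sqrt (1 / (2 * Real.sqrt p)) p := Real.hasDerivAt_sqrt hp0.ne'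
  have hbase : HasDerivAt (fun p : ℝ => (1+t) * Real.sqrt p + t)
      ((1+t) * (1 / (2 * Real.sqrt p))) p := (hsq.const_mul (1+t)).add_const t
  have hpow := (Real.hasDerivAt_rpow_const (p := -(1:ℝ)/2) (Or.inl hX.ne')).comp p hbase
  have H := (hpow.const_mul ((1:ℝ)/(2*(1+t)))).neg
  refine H.congr_deriv (Eq.symm ?_)
  unfold phi
  have e1 : ((1+t) * Real.sqrt p + t) ^ (-(1:ℝ)/2 - 1)
      = ((((1+t) * Real.sqrt p + t) ^ ((1:ℝ)/2))^3)⁻¹ := by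
    rw [show -(1:ℝ)/2 - 1 = -(3/2) by ring, Real.rpow_neg hX.le, rpow_threehalf hX.le]
  have e2 : ((1+t) * Real.sqrt p + t) ^ ((3:ℝ)/2)
      = (((1+t) * Real.sqrt p + t) ^ ((1:ℝ)/2))^3 := rpow_threehalf hX.le
  rw [e1, e2]
  have hBp : 0 < ((1+t) * Real.sqrt p + t) ^ ((1:ℝ)/2) := Real.rpow_pos_of_pos hX _
  have h1t : (0:ℝ) < 1 + t := by linarith
  field_simp
  ring

lemma phi_cont_anti (t : ℝ) (ht : 0 < t) :
    ContinuousOn (fun p : ℝ => -((1/(2*(1+t))) * ((1+t) * Real.sqrt p + t) ^ (-(1:ℝ)/2)))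
      (Set.Icc 0 1) := by
  apply ContinuousOn.neg
  apply ContinuousOn.mul continuousOn_const
  apply ContinuousOn.rpow_const
  · exact ((Real.continuous_sqrt.continuousOn.const_smul (1+t)).add continuousOn_const)
  · intro p hp
    left
    have : 0 ≤ Real.sqrt p := Real.sqrt_nonneg p
    nlinarith

lemma phi_intervalIntegrable (t : ℝ) (ht : 0 < t) :
    IntervalIntegrable (phi t) volume 0 1 := by
  rw [intervalIntegrable_iff_integrableOn_Ioc_of_le (by norm_num : (0:ℝ) ≤ 1)]
  apply IntegrableOn.congr_fun
    (f := fun p : ℝ => ((8 * ((1+t) * Real.sqrt p + t) ^ ((3:ℝ)/2))⁻¹) * p ^ (-(1:ℝ)/2))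
    ?_ ?_ measurableSet_Ioc
  · apply IntegrableOn.mono_set _ Set.Ioc_subset_Icc_self
    apply IntegrableOn.continuousOn_mul _ (intOn_rpow (by norm_num : (-1:ℝ) < -(1:ℝ)/2))
      isCompact_Icc
    apply ContinuousOn.inv₀
    · apply ContinuousOn.mul continuousOn_const
      apply ContinuousOn.rpow_const
        ((Real.continuous_sqrt.continuousOn.const_smul (1+t)).add continuousOn_const)
      exact fun p hp => Or.inr (by norm_num)
    · intro p hp
      have hs : 0 ≤ Real.sqrt p := Real.sqrt_nonneg p
      have hX : 0 < (1+t) * Real.sqrt p + t := by nlinarith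
      have := Real.rpow_pos_of_pos hX ((3:ℝ)/2)
      positivity
  · intro p hp
    have hp0 := hp.1
    show (8 * ((1+t) * Real.sqrt p + t) ^ ((3:ℝ)/2))⁻¹ * p ^ (-(1:ℝ)/2) = phi t p
    unfold phi
    rw [show -(1:ℝ)/2 = -((1:ℝ)/2) by norm_num, Real.rpow_neg hp0.le,
      ← Real.sqrt_eq_rpow, one_div, mul_inv, mul_inv]
    ring

lemma phi_integral (t : ℝ) (ht : 0 < t) :
    (∫ p in Set.Ioo (0:ℝ) 1, phi t p)
      = (1/(2*(1+t))) * (t ^ (-(1:ℝ)/2) - (1+2*t) ^ (-(1:ℝ)/2)) := by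
  have heval := intervalIntegral.integral_eq_sub_of_hasDerivAt_of_le (by norm_num : (0:ℝ) ≤ 1)
    (phi_cont_anti t ht) (fun p hp => phi_hasDeriv t ht hp.1 hp.2)
    (phi_intervalIntegrable t ht)
  rw [← integral_Ioc_eq_integral_Ioo, ← intervalIntegral.integral_of_le (by norm_num : (0:ℝ) ≤ 1),
    heval]
  rw [Real.sqrt_one, Real.sqrt_zero]
  rw [show ((1:ℝ)+t) * 1 + t = 1 + 2*t by ring, show ((1:ℝ)+t) * 0 + t = t by ring]
  ring

lemma inner_eval (t : ℝ) (ht : 0 < t) {p : ℝ} (hp0 : 0 < p) (hp1 : p < 1) :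
    (∫ x in Set.Ico (x0 p) 1, Wfn t x / Pden p) = phi t p := by
  have hx0p := x0_pos hp0
  have hx01 := x0_lt_one hp0 hp1
  have h1p : (0:ℝ) < 1 - p := by linarith
  have hcont : ContinuousOn (fun x : ℝ =>
      -(x ^ ((1:ℝ)/2) * (1 - x) ^ ((1:ℝ)/2)) /
        (4 * (x + 2 * t) ^ ((3:ℝ)/2) * p ^ ((3:ℝ)/4) * (1 - p) ^ ((1:ℝ)/2)))
      (Set.Icc (x0 p) 1) := by
    apply ContinuousOn.div
    · exact ((continuousOn_id.rpow_const (fun x _ => Or.inr (by norm_num))).mul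
        ((continuousOn_const.sub continuousOn_id).rpow_const
          (fun x _ => Or.inr (by norm_num)))).neg
    · exact ((continuousOn_const.mul ((continuousOn_id.add continuousOn_const).rpow_const
        (fun x _ => Or.inr (by norm_num)))).mul continuousOn_const).mul continuousOn_const
    · intro x hx
      have hxx : 0 < x + 2*t := by have := hx.1; nlinarith
      have := Real.rpow_pos_of_pos hxx ((3:ℝ)/2)
      have := Real.rpow_pos_of_pos hp0 ((3:ℝ)/4)
      have := Real.rpow_pos_of_pos h1p ((1:ℝ)/2)
      positivity
  have hderiv : ∀ x ∈ Set.Ioo (x0 p) 1, HasDerivAt (fun x : ℝ =>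
      -(x ^ ((1:ℝ)/2) * (1 - x) ^ ((1:ℝ)/2)) /
        (4 * (x + 2 * t) ^ ((3:ℝ)/2) * p ^ ((3:ℝ)/4) * (1 - p) ^ ((1:ℝ)/2)))
      (Wfn t x / Pden p) x :=
    fun x hx => F_hasDeriv t ht hp0 hp1 (lt_trans hx0p hx.1) hx.2
  have hint : IntervalIntegrable (fun x => Wfn t x / Pden p) volume (x0 p) 1 := by
    rw [intervalIntegrable_iff_integrableOn_Ioc_of_le hx01.le]
    apply Integrable.div_const
    show IntegrableOn (Wfn t) (Set.Ioc (x0 p) 1) volume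
    rw [integrableOn_Ioc_iff_integrableOn_Ioo]
    exact (Wfn_integrableOn t ht).mono_set (Set.Ioo_subset_Ioo hx0p.le le_rfl)
  have heval := intervalIntegral.integral_eq_sub_of_hasDerivAt_of_le hx01.le hcont hderiv hint
  rw [integral_Ico_eq_integral_Ioo, ← integral_Ioc_eq_integral_Ioo,
    ← intervalIntegral.integral_of_le hx01.le, heval]
  show -((1:ℝ) ^ ((1:ℝ)/2) * ((1:ℝ) - 1) ^ ((1:ℝ)/2)) /
        (4 * ((1:ℝ) + 2 * t) ^ ((3:ℝ)/2) * p ^ ((3:ℝ)/4) * (1 - p) ^ ((1:ℝ)/2))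
      - -((x0 p) ^ ((1:ℝ)/2) * (1 - x0 p) ^ ((1:ℝ)/2)) /
        (4 * (x0 p + 2 * t) ^ ((3:ℝ)/2) * p ^ ((3:ℝ)/4) * (1 - p) ^ ((1:ℝ)/2)) = phi t p
  rw [F_at_x0 t ht hp0 hp1]
  norm_num [Real.zero_rpow]

lemma Delta1_meas : MeasurableSet Delta1 := by
  show MeasurableSet {z : ℝ × ℝ | 0 < z.1 ∧ z.1 < 1 ∧ 0 < z.2 ∧ z.2 ≤ (z.1 / (2 - z.1)) ^ 2}
  apply MeasurableSet.inter
  · exact measurableSet_lt measurable_const measurable_fst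
  apply MeasurableSet.inter
  · exact measurableSet_lt measurable_fst measurable_const
  apply MeasurableSet.inter
  · exact measurableSet_lt measurable_const measurable_snd
  · exact measurableSet_le measurable_snd
      ((measurable_fst.div (measurable_const.sub measurable_fst)).pow_const 2)

lemma snd_lt_one_of_mem {z : ℝ × ℝ} (hz : z ∈ Delta1) : z.2 < 1 := by
  obtain ⟨hx0, hx1, hp0, hple⟩ := hz
  have h2x : (0:ℝ) < 2 - z.1 := by linarith
  have hq1 : z.1 / (2 - z.1) < 1 := (div_lt_one h2x).mpr (by linarith)
  have hq0 : 0 ≤ z.1 / (2 - z.1) := by positivity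
  nlinarith

/-- For `t > 0`, `∫_{Δ₁} ∂F₁/∂x dx dp = ∫₀¹ dx/(2(x+2t)^{3/2}(2−x)^{1/2})` where
`F₁(x,p) = −x^{1/2}(1−x)^{1/2}/(4(x+2t)^{3/2}p^{3/4}(1−p)^{1/2})`. -/
theorem stmt13 (t : ℝ) (ht : 0 < t) :
    (∫ z in Delta1, deriv (fun x : ℝ =>
        -(x ^ ((1:ℝ)/2) * (1 - x) ^ ((1:ℝ)/2)) /
          (4 * (x + 2 * t) ^ ((3:ℝ)/2) * z.2 ^ ((3:ℝ)/4) * (1 - z.2) ^ ((1:ℝ)/2))) z.1)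
    = ∫ x in Set.Ioo (0:ℝ) 1, 1 / (2 * (x + 2 * t) ^ ((3:ℝ)/2) * (2 - x) ^ ((1:ℝ)/2)) := by
  have hmeas := Delta1_meas
  set f : ℝ × ℝ → ℝ := fun z => Wfn t z.1 / Pden z.2 with hf_def
  have m1 : Measurable fun x : ℝ => x ^ ((1:ℝ)/2) :=
    (Real.continuous_rpow_const (by norm_num)).measurable
  have m2 : Measurable fun x : ℝ => (1-x) ^ ((1:ℝ)/2) :=
    m1.comp (measurable_const.sub measurable_id)
  have m3 : Measurable fun x : ℝ => (x + 2*t) ^ ((1:ℝ)/2) :=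
    m1.comp (measurable_id.add measurable_const)
  have m4 : Measurable fun x : ℝ => (x + 2*t) ^ ((3:ℝ)/2) :=
    ((Real.continuous_rpow_const (by norm_num : (0:ℝ) ≤ 3/2)).measurable).comp
      (measurable_id.add measurable_const)
  have mW : Measurable (Wfn t) := by
    unfold Wfn
    apply Measurable.div
    · apply Measurable.add
      · apply Measurable.mul
        · apply Measurable.mul
          · exact ((measurable_const.mul m2).div m1).sub ((measurable_const.mul m1).div m2)
          · exact measurable_const
        · exact measurable_const.mul m4
      · exact (m1.mul m2).mul (measurable_const.mul m3)
    · exact (measurable_const.mul m4).pow_const 2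
  have mP : Measurable Pden := by
    unfold Pden
    exact ((Real.continuous_rpow_const (by norm_num : (0:ℝ) ≤ 3/4)).measurable).mul m2
  have hWmeas : Measurable f := (mW.comp measurable_fst).div (mP.comp measurable_snd)
  have hcongr : Set.EqOn (fun z : ℝ × ℝ => deriv (fun x : ℝ =>
        -(x ^ ((1:ℝ)/2) * (1 - x) ^ ((1:ℝ)/2)) /
          (4 * (x + 2 * t) ^ ((3:ℝ)/2) * z.2 ^ ((3:ℝ)/4) * (1 - z.2) ^ ((1:ℝ)/2))) z.1)
      f Delta1 := by
    intro z hz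
    have hp1 : z.2 < 1 := snd_lt_one_of_mem hz
    obtain ⟨hx0, hx1, hp0, -⟩ := hz
    exact (F_hasDeriv t ht hp0 hp1 hx0 hx1).deriv
  rw [MeasureTheory.setIntegral_congr_fun hmeas hcongr]
  rw [← MeasureTheory.integral_indicator hmeas]
  rw [MeasureTheory.Measure.volume_eq_prod]
  -- integrability
  have hu : Integrable ((Set.Ioo (0:ℝ) 1).indicator (Wfn t)) volume :=
    (integrable_indicator_iff measurableSet_Ioo).mpr (Wfn_integrableOn t ht)
  have hv : Integrable ((Set.Ioo (0:ℝ) 1).indicator (fun p : ℝ => (Pden p)⁻¹)) volume :=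
    (integrable_indicator_iff measurableSet_Ioo).mpr Pden_inv_integrableOn
  have hH := hu.mul_prod hv
  have hbound : ∀ z : ℝ × ℝ, ‖Delta1.indicator f z‖ ≤
      ‖(Set.Ioo (0:ℝ) 1).indicator (Wfn t) z.1 *
        (Set.Ioo (0:ℝ) 1).indicator (fun p : ℝ => (Pden p)⁻¹) z.2‖ := by
    intro z
    by_cases hz : z ∈ Delta1
    · have hp1 : z.2 < 1 := snd_lt_one_of_mem hz
      obtain ⟨hx0, hx1, hp0, -⟩ := id hz
      have hxm : z.1 ∈ Set.Ioo (0:ℝ) 1 := ⟨hx0, hx1⟩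
      have hpm : z.2 ∈ Set.Ioo (0:ℝ) 1 := ⟨hp0, hp1⟩
      rw [Set.indicator_of_mem hz f, Set.indicator_of_mem hxm (Wfn t),
        Set.indicator_of_mem hpm (fun p : ℝ => (Pden p)⁻¹)]
      have : f z = Wfn t z.1 * (Pden z.2)⁻¹ := div_eq_mul_inv _ _
      rw [this]
    · rw [Set.indicator_of_notMem hz f, norm_zero]
      positivity
  have hint : Integrable (Delta1.indicator f) (volume.prod volume) :=
    MeasureTheory.Integrable.mono' hH.norm
      ((hWmeas.indicator hmeas).aestronglyMeasurable)
      (Filter.Eventually.of_forall hbound)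
  rw [MeasureTheory.integral_prod_symm _ hint]
  have hpoint : ∀ p : ℝ, (∫ x : ℝ, Delta1.indicator f (x, p))
      = (Set.Ioo (0:ℝ) 1).indicator (phi t) p := by
    intro p
    by_cases hp : p ∈ Set.Ioo (0:ℝ) 1
    · have hsec : ∀ x : ℝ, Delta1.indicator f (x, p)
          = (Set.Ico (x0 p) 1).indicator (fun x => Wfn t x / Pden p) x := by
        intro x
        by_cases hx : x ∈ Set.Ico (x0 p) 1
        · rw [Set.indicator_of_mem hx, Set.indicator_of_mem ((section_eq hp.1 hp.2 x).mpr hx)]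
        · rw [Set.indicator_of_notMem hx,
            Set.indicator_of_notMem (fun hmem => hx ((section_eq hp.1 hp.2 x).mp hmem))]
      simp_rw [hsec]
      rw [MeasureTheory.integral_indicator measurableSet_Ico, inner_eval t ht hp.1 hp.2,
        Set.indicator_of_mem hp]
    · have hzero : ∀ x : ℝ, Delta1.indicator f (x, p) = 0 := by
        intro x
        apply Set.indicator_of_notMem
        intro hmem
        exact hp ⟨hmem.2.2.1, snd_lt_one_of_mem hmem⟩
      rw [Set.indicator_of_notMem hp]
      simp only [hzero, integral_zero]
  simp_rw [hpoint]
  rw [MeasureTheory.integral_indicator measurableSet_Ioo, phi_integral t ht, rhs_eval t ht]
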